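/- Let n ≥ 3 and f ∈ C^{n+1} near z with f^{(l)}(z) = 0 for 1 ≤ l ≤ n−1 and f^{(n)}(z) ≠ 0. Let z_h satisfy z_h − z = O(h) and set x_{i,h} = z_h + a_i h, a₀ < ⋯ < a_n. Let p_h be the polynomial of degree ≤ n interpolating f at the x_{i,h}, and write P_h^{(n−2)}(w) = A_h w² + B_h w + C_h, where P_h(w) = p_h(z + wh). Then the discriminant satisfies B_h² − 4 A_h C_h = O(h^{2n+1}) as h → 0⁺. -/

import Mathlib

open Polynomial Asymptotics Filter Topology

set_option maxHeartbeats 1000000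
set_option maxRecDepth 4000

section AuxLemmas
open Set

lemma contDiff_polyeval (q : ℝ[X]) (m : ℕ) : ContDiff ℝ m fun x : ℝ => q.eval x := by
  induction q using Polynomial.induction_on' with
  | add p q hp hq => simpa using hp.add hq
  | monomial k a =>
      simpa [Polynomial.eval_monomial] using (contDiff_const (c := a)).mul (contDiff_id.pow k)

lemma coeff_comp_C_mul_X (q : ℝ[X]) (c : ℝ) (j : ℕ) :
    (q.comp (C c * X)).coeff j = c ^ j * q.coeff j := by
  induction q using Polynomial.induction_on' with
  | add p q hp hq => simp [add_comp, hp, hq, mul_add]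
  | monomial k a =>
      rw [← C_mul_X_pow_eq_monomial, mul_comp, C_comp, pow_comp, X_comp, mul_pow, ← C_pow,
        coeff_C_mul, mul_comm (C (c ^ k)) (X ^ k), coeff_mul_C, coeff_C_mul, coeff_X_pow]
      by_cases h : j = k <;> simp [h, mul_comm]

lemma coeff_comp_linear (p : ℝ[X]) (z c : ℝ) (j : ℕ) :
    (p.comp (C z + C c * X)).coeff j = c ^ j * (hasseDeriv j p).eval z := by
  have h1 : (C z + C c * X : ℝ[X]) = (X + C z).comp (C c * X) := by
    simp [add_comm]
  rw [h1, ← comp_assoc, ← taylor_apply, coeff_comp_C_mul_X, taylor_coeff]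

lemma iterated_rolle {U : Set ℝ} (hU : IsOpen U) :
    ∀ (m : ℕ) (g : ℝ → ℝ), ContDiffOn ℝ m g U → ∀ t : Fin (m + 1) → ℝ, StrictMono t →
      Set.Icc (t 0) (t (Fin.last m)) ⊆ U → (∀ i, g (t i) = 0) →
      ∃ ξ ∈ Set.Icc (t 0) (t (Fin.last m)), iteratedDeriv m g ξ = 0 := by
  intro m
  induction m with
  | zero =>
      intro g _ t _ _ hz
      exact ⟨t 0, ⟨le_refl _, le_of_eq rfl⟩, by simpa using hz 0⟩
  | succ m ih =>
      intro g hg t ht htU hz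
      have hlt : ∀ i : Fin (m + 1), t i.castSucc < t i.succ := fun i =>
        ht (Fin.castSucc_lt_succ (i := i))
      have hsub : ∀ i : Fin (m + 1), Set.Icc (t i.castSucc) (t i.succ) ⊆ U := by
        intro i
        refine subset_trans (Set.Icc_subset_Icc ?_ ?_) htU
        · exact ht.monotone (Fin.zero_le _)
        · exact ht.monotone (Fin.le_last _)
      have hcont : ContinuousOn g U := hg.continuousOn
      have hrolle : ∀ i : Fin (m + 1), ∃ c ∈ Set.Ioo (t i.castSucc) (t i.succ),
          deriv g c = 0 := by
        intro i
        refine exists_deriv_eq_zero (hlt i) (hcont.mono (hsub i)) ?_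
        rw [hz, hz]
      choose s hs hds using hrolle
      have hsmono : StrictMono s := by
        intro i j hij
        have h1 : s i < t i.succ := (hs i).2
        have h2 : t j.castSucc < s j := (hs j).1
        have h3 : t i.succ ≤ t j.castSucc := by
          apply ht.monotone
          rw [Fin.succ_le_castSucc_iff]
          exact hij
        linarith
      have hg' : ContDiffOn ℝ m (deriv g) U := by
        apply hg.deriv_of_isOpen hU
        exact_mod_cast le_of_eq (by norm_cast)
      have hsU : Set.Icc (s 0) (s (Fin.last m)) ⊆ U := by
        refine subset_trans (Set.Icc_subset_Icc ?_ ?_) htU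
        · exact le_of_lt ((hs 0).1.trans_le' (le_of_eq rfl))
        · have : s (Fin.last m) < t (Fin.last m).succ := (hs (Fin.last m)).2
          exact le_of_lt (this.trans_le (ht.monotone (Fin.le_last _)))
      obtain ⟨ξ, hξ1, hξ2⟩ := ih (deriv g) hg' s hsmono hsU hds
      refine ⟨ξ, ?_, ?_⟩
      · constructor
        · have h4 : t 0 ≤ s 0 := le_of_lt (hs 0).1
          exact h4.trans hξ1.1
        · have h5 : s (Fin.last m) ≤ t (Fin.last (m + 1)) := by
            have h6 : s (Fin.last m) < t (Fin.last m).succ := (hs (Fin.last m)).2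
            exact le_of_lt (h6.trans_le (ht.monotone (Fin.le_last _)))
          exact hξ1.2.trans h5
      · rw [iteratedDeriv_succ']
        exact hξ2

lemma iteratedDeriv_sub_poly {f : ℝ → ℝ} {U : Set ℝ} (hU : IsOpen U) {n : ℕ}
    (hdiff : ∀ k, k < n → ∀ x ∈ U, DifferentiableAt ℝ (iteratedDeriv k f) x)
    (q : ℝ[X]) :
    ∀ k, k ≤ n → ∀ x ∈ U, iteratedDeriv k (fun y => f y - q.eval y) x =
      iteratedDeriv k f x - (derivative^[k] q).eval x := by
  intro k
  induction k with
  | zero => intro _ x _; simp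
  | succ k ih =>
      intro hk x hx
      have hk' : k ≤ n := le_of_lt hk
      rw [iteratedDeriv_succ]
      have hev : (fun y => iteratedDeriv k (fun y => f y - q.eval y) y) =ᶠ[nhds x]
          (fun y => iteratedDeriv k f y - (derivative^[k] q).eval y) := by
        filter_upwards [hU.mem_nhds hx] with y hy
        exact ih hk' y hy
      rw [hev.deriv_eq]
      have h1 : HasDerivAt (fun y => iteratedDeriv k f y - (derivative^[k] q).eval y)
          (iteratedDeriv (k + 1) f x - (derivative^[k + 1] q).eval x) x := by
        have hf1 : HasDerivAt (iteratedDeriv k f) (iteratedDeriv (k + 1) f x) x := by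
          rw [iteratedDeriv_succ]
          exact (hdiff k hk x hx).hasDerivAt
        have hp1 : HasDerivAt (fun y => (derivative^[k] q).eval y)
            ((derivative (derivative^[k] q)).eval x) x := Polynomial.hasDerivAt _ x
        rw [Function.iterate_succ_apply']
        exact hf1.sub hp1
      exact h1.deriv

lemma contDiffOn_iteratedDeriv_of_isOpen {f : ℝ → ℝ} {U : Set ℝ} (hU : IsOpen U) {N : ℕ}
    (hf : ContDiffOn ℝ N f U) :
    ∀ k, k ≤ N → ContDiffOn ℝ ((N - k : ℕ)) (iteratedDeriv k f) U := by
  intro k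
  induction k with
  | zero => intro _; simpa using hf
  | succ k ih =>
      intro hk
      have h1 := ih (le_of_lt hk)
      rw [iteratedDeriv_succ]
      apply h1.deriv_of_isOpen hU
      have h2 : (N - k : ℕ) = (N - (k + 1) : ℕ) + 1 := by omega
      rw [h2]
      norm_cast

lemma differentiableAt_iteratedDeriv_of_isOpen {f : ℝ → ℝ} {U : Set ℝ} (hU : IsOpen U) {N : ℕ}
    (hf : ContDiffOn ℝ N f U) {k : ℕ} (hk : k < N) {x : ℝ} (hx : x ∈ U) :
    DifferentiableAt ℝ (iteratedDeriv k f) x := by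
  have h1 := contDiffOn_iteratedDeriv_of_isOpen hU hf k (le_of_lt hk)
  have h2 : (1 : WithTop ℕ∞) ≤ ((N - k : ℕ) : WithTop ℕ∞) := by
    have : (1 : ℕ) ≤ N - k := by omega
    exact_mod_cast this
  have h3 := (h1.of_le h2).differentiableOn one_ne_zero x hx
  exact h3.differentiableAt (hU.mem_nhds hx)

lemma hasDerivAt_iteratedDeriv_of_isOpen {f : ℝ → ℝ} {U : Set ℝ} (hU : IsOpen U) {N : ℕ}
    (hf : ContDiffOn ℝ N f U) {k : ℕ} (hk : k < N) {x : ℝ} (hx : x ∈ U) :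
    HasDerivAt (iteratedDeriv k f) (iteratedDeriv (k + 1) f x) x := by
  have h := (differentiableAt_iteratedDeriv_of_isOpen hU hf hk hx).hasDerivAt
  rwa [← iteratedDeriv_succ] at h

end AuxLemmas

section
open Set

/-- Near a critical point of order `n-1`, the discriminant of the quadratic
`(n-2)`-th derivative of the rescaled interpolation polynomial is `O(h^{2n+1})`. -/
theorem discriminant_near_high_order_critical_point
    (n : ℕ) (hn : 3 ≤ n) (z : ℝ) (a : Fin (n + 1) → ℝ) (ha : StrictMono a)
    (f : ℝ → ℝ) (δ : ℝ) (hδ : 0 < δ) (hf : ContDiffOn ℝ (n + 1) f (Metric.ball z δ))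
    (hcrit : ∀ l : ℕ, 1 ≤ l → l ≤ n - 1 → iteratedDeriv l f z = 0)
    (hn0 : iteratedDeriv n f z ≠ 0)
    (zh : ℝ → ℝ) (hzh : (fun h => zh h - z) =O[𝓝[>] (0 : ℝ)] fun h => h)
    (p : ℝ → Polynomial ℝ)
    (hdeg : ∀ h : ℝ, 0 < h → (p h).natDegree ≤ n)
    (hinterp : ∀ h : ℝ, 0 < h → ∀ i : Fin (n + 1),
      (p h).eval (zh h + a i * h) = f (zh h + a i * h))
    (A B C : ℝ → ℝ)
    (hA : ∀ h, A h = (Polynomial.derivative^[n - 2]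
      ((p h).comp (Polynomial.C z + Polynomial.C h * Polynomial.X))).coeff 2)
    (hB : ∀ h, B h = (Polynomial.derivative^[n - 2]
      ((p h).comp (Polynomial.C z + Polynomial.C h * Polynomial.X))).coeff 1)
    (hC : ∀ h, C h = (Polynomial.derivative^[n - 2]
      ((p h).comp (Polynomial.C z + Polynomial.C h * Polynomial.X))).coeff 0) :
    (fun h => B h ^ 2 - 4 * A h * C h) =O[𝓝[>] (0 : ℝ)] fun h => h ^ (2 * n + 1) := by
  set U := Metric.ball z δ with hU
  have hUo : IsOpen U := Metric.isOpen_ball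
  have hf' : ContDiffOn ℝ ((n + 1 : ℕ)) f U := by exact_mod_cast hf
  set F := iteratedDeriv n f z with hF
  -- bound on the (n+1)-st derivative on the closed ball of radius δ/2
  set Bd := Metric.closedBall z (δ / 2) with hBd
  have hBdU : Bd ⊆ U := Metric.closedBall_subset_ball (by linarith)
  have hzBd : z ∈ Bd := Metric.mem_closedBall_self (by linarith)
  have hcontN : ContinuousOn (iteratedDeriv (n + 1) f) U := by
    have h := contDiffOn_iteratedDeriv_of_isOpen hUo hf' (n + 1) le_rfl
    simpa using h.continuousOn
  obtain ⟨L, hL⟩ := (isCompact_closedBall z (δ / 2)).exists_bound_of_continuousOn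
    (hcontN.mono hBdU)
  have hL0 : 0 ≤ L := le_trans (norm_nonneg _) (hL z hzBd)
  -- Lipschitz bound for the n-th derivative on Bd
  have hLip : ∀ x ∈ Bd, ∀ y ∈ Bd, |iteratedDeriv n f y - iteratedDeriv n f x| ≤ L * |y - x| := by
    intro x hx y hy
    have := Convex.norm_image_sub_le_of_norm_deriv_le
      (f := iteratedDeriv n f) (C := L) (s := Bd)
      (fun w hw => differentiableAt_iteratedDeriv_of_isOpen hUo hf' (by omega) (hBdU hw))
      (fun w hw => by
        rw [show deriv (iteratedDeriv n f) w = iteratedDeriv (n + 1) f w by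
          rw [← iteratedDeriv_succ]]
        exact hL w hw)
      (convex_closedBall z (δ / 2)) hx hy
    simpa [Real.norm_eq_abs] using this
  -- the constants
  obtain ⟨c, hc⟩ := Asymptotics.isBigO_iff.mp hzh
  have hnonempty : (Finset.univ : Finset (Fin (n + 1))).Nonempty := Finset.univ_nonempty
  set aM := Finset.univ.sup' hnonempty (fun i => |a i|) with haMdef
  have haM : ∀ i, |a i| ≤ aM := fun i => Finset.le_sup' (fun j => |a j|) (Finset.mem_univ i)
  have haM0 : 0 ≤ aM := le_trans (abs_nonneg (a 0)) (haM 0)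
  set ρ := |c| + aM + 1 with hρdef
  have hρ0 : 0 < ρ := by positivity
  set dA := (((2 + (n - 2)).descFactorial (n - 2) : ℕ) : ℝ) with hdA
  set dB := (((1 + (n - 2)).descFactorial (n - 2) : ℕ) : ℝ) with hdB
  set dC := (((0 + (n - 2)).descFactorial (n - 2) : ℕ) : ℝ) with hdC
  have hdA0 : 0 ≤ dA := Nat.cast_nonneg _
  have hdB0 : 0 ≤ dB := Nat.cast_nonneg _
  have hdC0 : 0 ≤ dC := Nat.cast_nonneg _
  set MA := dA * (|F| + L * (δ / 2)) with hMA
  set KB := dB * (2 * L * ρ ^ 2) with hKB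
  set KC := dC * (4 * L * ρ ^ 3) with hKC
  have hMA0 : 0 ≤ MA := by positivity
  have hKB0 : 0 ≤ KB := by positivity
  have hKC0 : 0 ≤ KC := by positivity
  set h₀ := min (δ / (2 * ρ)) 1 with hh₀
  have h₀pos : 0 < h₀ := lt_min (by positivity) one_pos
  rw [Asymptotics.isBigO_iff]
  refine ⟨KB ^ 2 + 4 * MA * KC, ?_⟩
  filter_upwards [hc, Ioo_mem_nhdsGT_of_mem (show (0 : ℝ) ∈ Set.Ico 0 h₀ from ⟨le_refl _, h₀pos⟩)]
    with h hch hmem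
  obtain ⟨hpos, hlt⟩ := hmem
  have hle1 : h ≤ 1 := le_trans hlt.le (min_le_right _ _)
  have hleδ : h ≤ δ / (2 * ρ) := le_trans hlt.le (min_le_left _ _)
  set r := ρ * h with hr
  have hr0 : 0 < r := by positivity
  have hrδ : r ≤ δ / 2 := by
    rw [hr]
    calc ρ * h ≤ ρ * (δ / (2 * ρ)) := by
          exact mul_le_mul_of_nonneg_left hleδ hρ0.le
      _ = δ / 2 := by field_simp
  -- interpolation points
  set x : Fin (n + 1) → ℝ := fun i => zh h + a i * h with hx
  have hxr : ∀ i, |x i - z| ≤ r := by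
    intro i
    have h1 : |zh h - z| ≤ |c| * h := by
      have := hch
      rw [Real.norm_eq_abs, Real.norm_eq_abs, abs_of_pos hpos] at this
      calc |zh h - z| ≤ c * h := this
        _ ≤ |c| * h := mul_le_mul_of_nonneg_right (le_abs_self c) hpos.le
    have h2 : |a i * h| ≤ aM * h := by
      rw [abs_mul, abs_of_pos hpos]
      exact mul_le_mul_of_nonneg_right (haM i) hpos.le
    calc |x i - z| = |(zh h - z) + a i * h| := by rw [hx]; ring_nf
      _ ≤ |zh h - z| + |a i * h| := abs_add_le _ _
      _ ≤ |c| * h + aM * h := add_le_add h1 h2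
      _ ≤ r := by rw [hr, hρdef]; nlinarith
  have hrBd : Metric.closedBall z r ⊆ Bd :=
    Metric.closedBall_subset_closedBall hrδ
  have hxBd : ∀ i, x i ∈ Metric.closedBall z r := by
    intro i
    rw [Metric.mem_closedBall, Real.dist_eq]
    exact hxr i
  have hxmono : StrictMono x := by
    intro i j hij
    have := ha hij
    rw [hx]
    simp only
    nlinarith
  -- Rolle applications
  set g : ℝ → ℝ := fun y => f y - (p h).eval y with hg
  have hdiffs : ∀ k, k < n + 1 → ∀ w ∈ U, DifferentiableAt ℝ (iteratedDeriv k f) w :=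
    fun k hk w hw => differentiableAt_iteratedDeriv_of_isOpen hUo hf' hk hw
  have rolle_app : ∀ m : ℕ, m ≤ n → ∃ ξ, |ξ - z| ≤ r ∧
      iteratedDeriv m f ξ = (derivative^[m] (p h)).eval ξ := by
    intro m hm
    have hmn1 : m + 1 ≤ n + 1 := by omega
    set t : Fin (m + 1) → ℝ := fun i => x (Fin.castLE hmn1 i) with ht
    have htmono : StrictMono t := by
      intro i j hij
      apply hxmono
      rw [Fin.lt_def] at hij ⊢
      simpa using hij
    have ht0 : |t 0 - z| ≤ r := hxr _
    have htl : |t (Fin.last m) - z| ≤ r := hxr _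
    have hIccr : Set.Icc (t 0) (t (Fin.last m)) ⊆ Metric.closedBall z r := by
      intro y hy
      rw [Metric.mem_closedBall, Real.dist_eq, abs_le]
      rw [abs_le] at ht0 htl
      constructor <;> [linarith [hy.1]; linarith [hy.2]]
    have hIccU : Set.Icc (t 0) (t (Fin.last m)) ⊆ U :=
      subset_trans hIccr (subset_trans hrBd hBdU)
    have hgC : ContDiffOn ℝ m g U := by
      refine ContDiffOn.sub (hf'.of_le ?_) ((contDiff_polyeval (p h) m).contDiffOn)
      exact_mod_cast (by omega : m ≤ n + 1)
    obtain ⟨ξ, hξmem, hξ0⟩ := iterated_rolle hUo m g hgC t htmono hIccU (fun i => by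
      have hti : t i = zh h + a (Fin.castLE hmn1 i) * h := by rw [ht]
      simp only [hg]
      rw [hti, hinterp h hpos]
      ring)
    have hξr : |ξ - z| ≤ r := by
      have := hIccr hξmem
      rwa [Metric.mem_closedBall, Real.dist_eq] at this
    refine ⟨ξ, hξr, ?_⟩
    have := iteratedDeriv_sub_poly hUo hdiffs (p h) m (by omega) ξ (hIccU hξmem)
    rw [hg] at hξ0
    rw [hξ0] at this
    linarith [this]
  obtain ⟨ξ₀, hξ₀r, hξ₀⟩ := rolle_app n le_rfl
  obtain ⟨ξ₁, hξ₁r, hξ₁⟩ := rolle_app (n - 1) (by omega)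
  obtain ⟨ξ₂, hξ₂r, hξ₂⟩ := rolle_app (n - 2) (by omega)
  -- polynomial structure
  set q0 := derivative^[n] (p h) with hq0d
  set q1 := derivative^[n - 1] (p h) with hq1d
  set q2 := derivative^[n - 2] (p h) with hq2d
  have hq01 : derivative q1 = q0 := by
    rw [hq0d, hq1d]
    conv_rhs => rw [show n = (n - 1) + 1 from by omega]
    rw [Function.iterate_succ_apply']
  have hq12 : derivative q2 = q1 := by
    rw [hq1d, hq2d]
    conv_rhs => rw [show n - 1 = (n - 2) + 1 from by omega]
    rw [Function.iterate_succ_apply']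
  have hpdeg := hdeg h hpos
  have hdeg0 : q0.natDegree ≤ 0 :=
    le_trans (natDegree_iterate_derivative _ _) (by omega)
  have hdeg1 : q1.natDegree ≤ 1 :=
    le_trans (natDegree_iterate_derivative _ _) (by omega)
  have hdeg2 : q2.natDegree ≤ 2 :=
    le_trans (natDegree_iterate_derivative _ _) (by omega)
  set c0 := q0.coeff 0 with hc0d
  have hq0C : q0 = Polynomial.C c0 := eq_C_of_natDegree_le_zero hdeg0
  set b0 := q1.coeff 0 with hb0d
  set a0 := q2.coeff 0 with ha0d
  have hq1c1 : q1.coeff 1 = c0 := by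
    have h1 := coeff_derivative q1 0
    rw [hq01, hq0C] at h1
    simpa using h1.symm
  have hq2c1 : q2.coeff 1 = b0 := by
    have h1 := coeff_derivative q2 0
    rw [hq12] at h1
    simpa [hb0d] using h1.symm
  have hq2c2 : q2.coeff 2 = c0 / 2 := by
    have h1 := coeff_derivative q2 1
    rw [hq12, hq1c1] at h1
    push_cast at h1
    field_simp
    linarith
  have heval1 : ∀ y : ℝ, q1.eval y = b0 + c0 * y := by
    intro y
    rw [eval_eq_sum_range' (lt_of_le_of_lt hdeg1 (by norm_num : (1:ℕ) < 2))]
    rw [Finset.sum_range_succ, Finset.sum_range_succ, Finset.sum_range_zero]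
    rw [hq1c1]
    ring_nf
    linarith [hb0d]
  have heval2 : ∀ y : ℝ, q2.eval y = a0 + b0 * y + (c0 / 2) * y ^ 2 := by
    intro y
    rw [eval_eq_sum_range' (lt_of_le_of_lt hdeg2 (by norm_num : (2:ℕ) < 3))]
    rw [Finset.sum_range_succ, Finset.sum_range_succ, Finset.sum_range_succ,
      Finset.sum_range_zero]
    rw [hq2c1, hq2c2]
    ring_nf
    linarith [ha0d]
  -- scalar equations from the Rolle points
  have e0 : iteratedDeriv n f ξ₀ = c0 := by
    rw [hξ₀, hq0C, eval_C]
  have eq1 : iteratedDeriv (n - 1) f ξ₁ = b0 + c0 * ξ₁ := by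
    rw [hξ₁, heval1]
  have eq2 : iteratedDeriv (n - 2) f ξ₂ = a0 + b0 * ξ₂ + (c0 / 2) * ξ₂ ^ 2 := by
    rw [hξ₂, heval2]
  -- analytic bounds
  have hξ₀Bd : ξ₀ ∈ Bd := hrBd (by rw [Metric.mem_closedBall, Real.dist_eq]; exact hξ₀r)
  have hc0F : |c0 - F| ≤ L * r := by
    rw [← e0, hF]
    calc |iteratedDeriv n f ξ₀ - iteratedDeriv n f z| ≤ L * |ξ₀ - z| :=
          hLip z hzBd ξ₀ hξ₀Bd
      _ ≤ L * r := mul_le_mul_of_nonneg_left hξ₀r hL0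
  have hψ1 : ∀ w ∈ Metric.closedBall z r,
      |iteratedDeriv (n - 1) f w - (w - z) * F| ≤ (L * r) * |w - z| := by
    have hder : ∀ v ∈ Metric.closedBall z r,
        HasDerivAt (fun y => iteratedDeriv (n - 1) f y - (y - z) * F)
          (iteratedDeriv n f v - F) v := by
      intro v hv
      have h1 : HasDerivAt (iteratedDeriv (n - 1) f) (iteratedDeriv ((n - 1) + 1) f v) v :=
        hasDerivAt_iteratedDeriv_of_isOpen hUo hf' (by omega) (hBdU (hrBd hv))
      rw [show (n - 1) + 1 = n from by omega] at h1
      have h2 : HasDerivAt (fun y => (y - z) * F) F v := by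
        simpa using ((hasDerivAt_id v).sub_const z).mul_const F
      exact h1.sub h2
    intro w hw
    have hbound : ∀ v ∈ Metric.closedBall z r,
        ‖deriv (fun y => iteratedDeriv (n - 1) f y - (y - z) * F) v‖ ≤ L * r := by
      intro v hv
      rw [(hder v hv).deriv, Real.norm_eq_abs]
      have hvr : |v - z| ≤ r := by
        rw [← Real.dist_eq]; exact Metric.mem_closedBall.mp hv
      calc |iteratedDeriv n f v - F| = |iteratedDeriv n f v - iteratedDeriv n f z| := by
            rw [hF]
        _ ≤ L * |v - z| := hLip z hzBd v (hrBd hv)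
        _ ≤ L * r := mul_le_mul_of_nonneg_left hvr hL0
    have hmvt := Convex.norm_image_sub_le_of_norm_deriv_le
      (fun v hv => (hder v hv).differentiableAt) hbound (convex_closedBall z r)
      (Metric.mem_closedBall_self hr0.le) hw
    have hz0 : iteratedDeriv (n - 1) f z = 0 := hcrit (n - 1) (by omega) (by omega)
    simpa [Real.norm_eq_abs, hz0] using hmvt
  have hψ2 : ∀ w ∈ Metric.closedBall z r,
      |iteratedDeriv (n - 2) f w - (w - z) ^ 2 * (F / 2)| ≤ (L * r * r) * |w - z| := by
    have hder : ∀ v ∈ Metric.closedBall z r,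
        HasDerivAt (fun y => iteratedDeriv (n - 2) f y - (y - z) ^ 2 * (F / 2))
          (iteratedDeriv (n - 1) f v - (v - z) * F) v := by
      intro v hv
      have h1 : HasDerivAt (iteratedDeriv (n - 2) f) (iteratedDeriv ((n - 2) + 1) f v) v :=
        hasDerivAt_iteratedDeriv_of_isOpen hUo hf' (by omega) (hBdU (hrBd hv))
      rw [show (n - 2) + 1 = n - 1 from by omega] at h1
      have h2 : HasDerivAt (fun y => (y - z) ^ 2 * (F / 2))
          (((2 : ℕ) * (v - z) ^ (2 - 1) * 1) * (F / 2)) v :=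
        (((hasDerivAt_id v).sub_const z).pow 2).mul_const (F / 2)
      have h3 : HasDerivAt (fun y => iteratedDeriv (n - 2) f y - (y - z) ^ 2 * (F / 2)) _ v :=
        h1.sub h2
      convert h3 using 1
      push_cast
      ring
    intro w hw
    have hbound : ∀ v ∈ Metric.closedBall z r,
        ‖deriv (fun y => iteratedDeriv (n - 2) f y - (y - z) ^ 2 * (F / 2)) v‖ ≤ L * r * r := by
      intro v hv
      rw [(hder v hv).deriv, Real.norm_eq_abs]
      have hvr : |v - z| ≤ r := by
        rw [← Real.dist_eq]; exact Metric.mem_closedBall.mp hv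
      calc |iteratedDeriv (n - 1) f v - (v - z) * F| ≤ (L * r) * |v - z| := hψ1 v hv
        _ ≤ (L * r) * r := mul_le_mul_of_nonneg_left hvr (mul_nonneg hL0 hr0.le)
        _ = L * r * r := by ring
    have hmvt := Convex.norm_image_sub_le_of_norm_deriv_le
      (fun v hv => (hder v hv).differentiableAt) hbound (convex_closedBall z r)
      (Metric.mem_closedBall_self hr0.le) hw
    have hz0 : iteratedDeriv (n - 2) f z = 0 := hcrit (n - 2) (by omega) (by omega)
    simpa [Real.norm_eq_abs, hz0] using hmvt
  have hξ₁mem : ξ₁ ∈ Metric.closedBall z r := by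
    rw [Metric.mem_closedBall, Real.dist_eq]; exact hξ₁r
  have hξ₂mem : ξ₂ ∈ Metric.closedBall z r := by
    rw [Metric.mem_closedBall, Real.dist_eq]; exact hξ₂r
  have hψ1ξ : |iteratedDeriv (n - 1) f ξ₁ - (ξ₁ - z) * F| ≤ L * r * r := by
    calc |iteratedDeriv (n - 1) f ξ₁ - (ξ₁ - z) * F| ≤ (L * r) * |ξ₁ - z| := hψ1 ξ₁ hξ₁mem
      _ ≤ (L * r) * r := mul_le_mul_of_nonneg_left hξ₁r (mul_nonneg hL0 hr0.le)
      _ = L * r * r := by ring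
  have hψ2ξ : |iteratedDeriv (n - 2) f ξ₂ - (ξ₂ - z) ^ 2 * (F / 2)| ≤ L * r * r * r := by
    calc |iteratedDeriv (n - 2) f ξ₂ - (ξ₂ - z) ^ 2 * (F / 2)| ≤ (L * r * r) * |ξ₂ - z| :=
          hψ2 ξ₂ hξ₂mem
      _ ≤ (L * r * r) * r :=
          mul_le_mul_of_nonneg_left hξ₂r (mul_nonneg (mul_nonneg hL0 hr0.le) hr0.le)
      _ = L * r * r * r := by ring
  -- key algebraic identities
  set w1 := iteratedDeriv (n - 2) f ξ₂ - (ξ₂ - z) ^ 2 * (F / 2) with hw1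
  set w2 := iteratedDeriv (n - 1) f ξ₁ - (ξ₁ - z) * F with hw2
  have keyB : q1.eval z = w2 - (ξ₁ - z) * (c0 - F) := by
    rw [hw2, heval1, eq1]
    ring
  have keyC : q2.eval z = w1 - (ξ₂ - z) * w2
      + (c0 - F) * ((ξ₂ - z) * (ξ₁ - z) - (ξ₂ - z) ^ 2 / 2) := by
    rw [hw1, hw2, heval2, eq2, eq1]
    ring
  -- bounds on the evaluations at z
  have hEB : |q1.eval z| ≤ 2 * L * r ^ 2 := by
    rw [keyB]
    have t2 : |(ξ₁ - z) * (c0 - F)| ≤ r * (L * r) := by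
      rw [abs_mul]
      exact mul_le_mul hξ₁r hc0F (abs_nonneg _) hr0.le
    calc |w2 - (ξ₁ - z) * (c0 - F)| ≤ |w2| + |(ξ₁ - z) * (c0 - F)| := abs_sub _ _
      _ ≤ L * r * r + r * (L * r) := add_le_add hψ1ξ t2
      _ = 2 * L * r ^ 2 := by ring
  have hEC : |q2.eval z| ≤ 4 * L * r ^ 3 := by
    rw [keyC]
    have t2 : |(ξ₂ - z) * w2| ≤ r * (L * r * r) := by
      rw [abs_mul]
      exact mul_le_mul hξ₂r hψ1ξ (abs_nonneg _) hr0.le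
    have t3 : |(c0 - F) * ((ξ₂ - z) * (ξ₁ - z) - (ξ₂ - z) ^ 2 / 2)|
        ≤ (L * r) * (r * r + r * r / 2) := by
      rw [abs_mul]
      apply mul_le_mul hc0F _ (abs_nonneg _) (mul_nonneg hL0 hr0.le)
      calc |(ξ₂ - z) * (ξ₁ - z) - (ξ₂ - z) ^ 2 / 2|
          ≤ |(ξ₂ - z) * (ξ₁ - z)| + |(ξ₂ - z) ^ 2 / 2| := abs_sub _ _
        _ ≤ r * r + r * r / 2 := by
            apply add_le_add
            · rw [abs_mul]
              exact mul_le_mul hξ₂r hξ₁r (abs_nonneg _) hr0.le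
            · rw [abs_div, abs_pow, ← sq_abs, abs_abs, abs_two]
              have hsq : |ξ₂ - z| ^ 2 ≤ r * r := by
                rw [sq]
                exact mul_le_mul hξ₂r hξ₂r (abs_nonneg _) hr0.le
              linarith
    calc |w1 - (ξ₂ - z) * w2 + (c0 - F) * ((ξ₂ - z) * (ξ₁ - z) - (ξ₂ - z) ^ 2 / 2)|
        ≤ |w1 - (ξ₂ - z) * w2|
          + |(c0 - F) * ((ξ₂ - z) * (ξ₁ - z) - (ξ₂ - z) ^ 2 / 2)| := abs_add_le _ _
      _ ≤ (|w1| + |(ξ₂ - z) * w2|)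
          + |(c0 - F) * ((ξ₂ - z) * (ξ₁ - z) - (ξ₂ - z) ^ 2 / 2)| :=
            add_le_add_left (abs_sub _ _) _
      _ ≤ (L * r * r * r + r * (L * r * r)) + (L * r) * (r * r + r * r / 2) :=
            add_le_add (add_le_add hψ2ξ t2) t3
      _ ≤ 4 * L * r ^ 3 := by
            have h35 : 0 ≤ L * r ^ 3 := mul_nonneg hL0 (pow_nonneg hr0.le 3)
            have hexp : (L * r * r * r + r * (L * r * r)) + (L * r) * (r * r + r * r / 2)
                = 3.5 * (L * r ^ 3) := by ring
            rw [hexp]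
            linarith
  have hEA : |q0.eval z| ≤ |F| + L * (δ / 2) := by
    rw [hq0C, eval_C]
    calc |c0| = |F + (c0 - F)| := by ring_nf
      _ ≤ |F| + |c0 - F| := abs_add_le _ _
      _ ≤ |F| + L * r := add_le_add_right hc0F _
      _ ≤ |F| + L * (δ / 2) := by
          apply add_le_add_right
          exact mul_le_mul_of_nonneg_left hrδ hL0
  -- relate A, B, C to the evaluations
  have hQc : ∀ j, ((p h).comp (Polynomial.C z + Polynomial.C h * Polynomial.X)).coeff j
      = h ^ j * (hasseDeriv j (p h)).eval z := fun j => coeff_comp_linear (p h) z h j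
  have hhasse : ∀ k : ℕ, (derivative^[k] (p h)).eval z
      = (Nat.factorial k : ℝ) * (hasseDeriv k (p h)).eval z := by
    intro k
    have h1 : derivative^[k] (p h) = Nat.factorial k • hasseDeriv k (p h) := by
      rw [← Polynomial.factorial_smul_hasseDeriv]
      simp
    rw [h1, eval_smul, nsmul_eq_mul]
  have habs : ∀ k : ℕ, |(hasseDeriv k (p h)).eval z| ≤ |(derivative^[k] (p h)).eval z| := by
    intro k
    rw [hhasse k, abs_mul]
    have h1 : (1 : ℝ) ≤ |(Nat.factorial k : ℝ)| := by
      rw [abs_of_pos (by exact_mod_cast Nat.factorial_pos k)]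
      exact_mod_cast Nat.one_le_iff_ne_zero.mpr (Nat.factorial_ne_zero k)
    exact le_mul_of_one_le_left (abs_nonneg _) h1
  have hAval : A h = dA * (h ^ n * (hasseDeriv n (p h)).eval z) := by
    rw [hA h, coeff_iterate_derivative, nsmul_eq_mul, ← hdA,
      show 2 + (n - 2) = n from by omega, hQc n]
  have hBval : B h = dB * (h ^ (n - 1) * (hasseDeriv (n - 1) (p h)).eval z) := by
    rw [hB h, coeff_iterate_derivative, nsmul_eq_mul, ← hdB,
      show 1 + (n - 2) = n - 1 from by omega, hQc (n - 1)]
  have hCval : C h = dC * (h ^ (n - 2) * (hasseDeriv (n - 2) (p h)).eval z) := by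
    rw [hC h, coeff_iterate_derivative, nsmul_eq_mul, ← hdC,
      show 0 + (n - 2) = n - 2 from by omega, hQc (n - 2)]
  -- power bookkeeping
  have hp1 : h ^ (n - 1) * h ^ 2 = h ^ (n + 1) := by
    rw [← pow_add]; congr 1; omega
  have hp2 : h ^ (n - 2) * h ^ 3 = h ^ (n + 1) := by
    rw [← pow_add]; congr 1; omega
  have hp3 : h ^ (n + 1) * h ^ (n + 1) = h ^ (2 * n + 1) * h := by
    rw [← pow_add, ← pow_succ]; congr 1; omega
  have hp4 : h ^ n * h ^ (n + 1) = h ^ (2 * n + 1) := by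
    rw [← pow_add]; congr 1; omega
  -- the three final coefficient bounds
  have hAbound : |A h| ≤ MA * h ^ n := by
    rw [hAval, abs_mul, abs_mul, abs_of_nonneg hdA0, abs_of_nonneg (pow_nonneg hpos.le n)]
    have h1 : |(hasseDeriv n (p h)).eval z| ≤ |F| + L * (δ / 2) := (habs n).trans hEA
    calc dA * (h ^ n * |(hasseDeriv n (p h)).eval z|)
        ≤ dA * (h ^ n * (|F| + L * (δ / 2))) := by
          apply mul_le_mul_of_nonneg_left _ hdA0
          exact mul_le_mul_of_nonneg_left h1 (pow_nonneg hpos.le n)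
      _ = MA * h ^ n := by rw [hMA]; ring
  have hBbound : |B h| ≤ KB * h ^ (n + 1) := by
    rw [hBval, abs_mul, abs_mul, abs_of_nonneg hdB0, abs_of_nonneg (pow_nonneg hpos.le _)]
    have h1 : |(hasseDeriv (n - 1) (p h)).eval z| ≤ 2 * L * r ^ 2 := (habs _).trans hEB
    calc dB * (h ^ (n - 1) * |(hasseDeriv (n - 1) (p h)).eval z|)
        ≤ dB * (h ^ (n - 1) * (2 * L * r ^ 2)) := by
          apply mul_le_mul_of_nonneg_left _ hdB0
          exact mul_le_mul_of_nonneg_left h1 (pow_nonneg hpos.le _)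
      _ = KB * (h ^ (n - 1) * h ^ 2) := by rw [hKB, hr]; ring
      _ = KB * h ^ (n + 1) := by rw [hp1]
  have hCbound : |C h| ≤ KC * h ^ (n + 1) := by
    rw [hCval, abs_mul, abs_mul, abs_of_nonneg hdC0, abs_of_nonneg (pow_nonneg hpos.le _)]
    have h1 : |(hasseDeriv (n - 2) (p h)).eval z| ≤ 4 * L * r ^ 3 := (habs _).trans hEC
    calc dC * (h ^ (n - 2) * |(hasseDeriv (n - 2) (p h)).eval z|)
        ≤ dC * (h ^ (n - 2) * (4 * L * r ^ 3)) := by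
          apply mul_le_mul_of_nonneg_left _ hdC0
          exact mul_le_mul_of_nonneg_left h1 (pow_nonneg hpos.le _)
      _ = KC * (h ^ (n - 2) * h ^ 3) := by rw [hKC, hr]; ring
      _ = KC * h ^ (n + 1) := by rw [hp2]
  -- final assembly
  have hpow_nonneg : (0 : ℝ) ≤ h ^ (2 * n + 1) := pow_nonneg hpos.le _
  rw [Real.norm_eq_abs, Real.norm_eq_abs, abs_of_nonneg hpow_nonneg]
  have hB2 : |B h| ^ 2 ≤ (KB * h ^ (n + 1)) ^ 2 :=
    pow_le_pow_left₀ (abs_nonneg _) hBbound 2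
  have hAC : |A h| * |C h| ≤ (MA * h ^ n) * (KC * h ^ (n + 1)) :=
    mul_le_mul hAbound hCbound (abs_nonneg _) (mul_nonneg hMA0 (pow_nonneg hpos.le n))
  calc |B h ^ 2 - 4 * A h * C h| ≤ |B h ^ 2| + |4 * A h * C h| := abs_sub _ _
    _ = |B h| ^ 2 + 4 * (|A h| * |C h|) := by
        rw [abs_pow, abs_mul, abs_mul, abs_of_nonneg (by norm_num : (0:ℝ) ≤ 4)]
        ring
    _ ≤ (KB * h ^ (n + 1)) ^ 2 + 4 * ((MA * h ^ n) * (KC * h ^ (n + 1))) := by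
        refine add_le_add hB2 ?_
        exact mul_le_mul_of_nonneg_left hAC (by norm_num)
    _ = KB ^ 2 * (h ^ (n + 1) * h ^ (n + 1)) + (4 * MA * KC) * (h ^ n * h ^ (n + 1)) := by
        ring
    _ = KB ^ 2 * (h ^ (2 * n + 1) * h) + (4 * MA * KC) * h ^ (2 * n + 1) := by
        rw [hp3, hp4]
    _ ≤ KB ^ 2 * (h ^ (2 * n + 1) * 1) + (4 * MA * KC) * h ^ (2 * n + 1) := by
        refine add_le_add_left (mul_le_mul_of_nonneg_left ?_ (sq_nonneg KB)) _
        exact mul_le_mul_of_nonneg_left hle1 hpow_nonneg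
    _ = (KB ^ 2 + 4 * MA * KC) * h ^ (2 * n + 1) := by ring

end
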